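/- Let χ, χ' be two multiplicative characters K^× → C_p^× of the same modulus (|χ(π)|_p = |χ'(π)|_p) with χ|_{o_K^×} and χ'|_{o_K^×} of finite image. If χ'(π) = χ(π) but χ' ≠ χ, and f: K^× → C_p satisfies lim_{x→0} fχ(x) = L ≠ 0 and lim_{x→0} fχ'(x) exists, then a contradiction arises; hence lim_{x→0} fχ(x) = 0. -/

import Mathlib

open Filter Topology

/-- Let `χ, χ'` be two multiplicative characters `K^× → ℂ_p^×` of the same modulus
(`|χ(π)|_p = |χ'(π)|_p`), with finite image on units (expressed by triviality on a small
subgroup `1 + π^n o_K`).  If `χ'(π) = χ(π)` but `χ' ≠ χ` (witnessed on a unit `t`), and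
`f : K^× → ℂ_p` is such that `lim_{x→0} f(x)χ(x) = L` and `lim_{x→0} f(x)χ'(x)` exists,
then `L = 0`. -/
theorem limit_zero_of_distinct_twists
    (K : Type*) [NontriviallyNormedField K]
    (Cp : Type*) [NormedField Cp]
    (π : K) (hπ0 : π ≠ 0) (hπ1 : ‖π‖ < 1)
    (hval : ∀ x : K, x ≠ 0 → ∃ (n : ℤ) (u : K), ‖u‖ = 1 ∧ x = π ^ n * u)
    (χ χ' : K → Cp)
    (hχmul : ∀ x y : K, x ≠ 0 → y ≠ 0 → χ (x * y) = χ x * χ y)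
    (hχ'mul : ∀ x y : K, x ≠ 0 → y ≠ 0 → χ' (x * y) = χ' x * χ' y)
    (hχ1 : χ 1 = 1) (hχ'1 : χ' 1 = 1)
    -- same modulus:
    (hmod : ‖χ π‖ = ‖χ' π‖)
    -- equal value at the uniformizer:
    (hππ : χ' π = χ π)
    -- `χ' ≠ χ`, witnessed on a unit:
    (t : K) (ht : ‖t‖ = 1) (htne : χ' t ≠ χ t)
    -- finite image on units: both characters are trivial on `1 + π^n o_K` for some `n`:
    (hsmall : ∃ n : ℕ, ∀ u : K, ‖u - 1‖ ≤ ‖π‖ ^ n → χ u = 1 ∧ χ' u = 1)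
    (f : K → Cp) (L : Cp)
    (hL : Tendsto (fun x => f x * χ x) (𝓝[≠] (0 : K)) (𝓝 L))
    (hL' : ∃ L' : Cp, Tendsto (fun x => f x * χ' x) (𝓝[≠] (0 : K)) (𝓝 L')) :
    L = 0 := by
  by_contra hLne
  obtain ⟨L', hL'⟩ := hL'
  have ht0 : t ≠ 0 := by intro h; rw [h] at ht; simp at ht
  have hχt : χ t ≠ 0 := by
    intro h
    have h2 := hχmul t t⁻¹ ht0 (inv_ne_zero ht0)
    rw [mul_inv_cancel₀ ht0, hχ1, h, zero_mul] at h2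
    exact one_ne_zero h2
  have hpow : ∀ k : ℕ, χ (π ^ k) = (χ π) ^ k ∧ χ' (π ^ k) = (χ π) ^ k := by
    intro k
    induction k with
    | zero => simp [hχ1, hχ'1]
    | succ n ih =>
      have hp : π ^ n ≠ 0 := pow_ne_zero _ hπ0
      refine ⟨?_, ?_⟩
      · rw [pow_succ, hχmul _ _ hp hπ0, ih.1, ← pow_succ]
      · rw [pow_succ, hχ'mul _ _ hp hπ0, ih.2, hππ, ← pow_succ]
  have htend : Tendsto (fun k : ℕ => π ^ k) atTop (𝓝[≠] (0:K)) := by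
    apply tendsto_nhdsWithin_of_tendsto_nhds_of_eventually_within
    · exact tendsto_pow_atTop_nhds_zero_of_norm_lt_one hπ1
    · exact Eventually.of_forall fun k => pow_ne_zero _ hπ0
  have htend' : Tendsto (fun k : ℕ => π ^ k * t) atTop (𝓝[≠] (0:K)) := by
    apply tendsto_nhdsWithin_of_tendsto_nhds_of_eventually_within
    · simpa using (tendsto_pow_atTop_nhds_zero_of_norm_lt_one hπ1).mul_const t
    · exact Eventually.of_forall fun k => mul_ne_zero (pow_ne_zero _ hπ0) ht0
  have h1 : Tendsto (fun k : ℕ => f (π^k) * χ (π^k)) atTop (𝓝 L) := hL.comp htend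
  have h2 : Tendsto (fun k : ℕ => f (π^k) * χ' (π^k)) atTop (𝓝 L') := hL'.comp htend
  have heq : (fun k : ℕ => f (π^k) * χ' (π^k)) = fun k => f (π^k) * χ (π^k) := by
    funext k; rw [(hpow k).1, (hpow k).2]
  rw [heq] at h2
  have hLL' : L = L' := tendsto_nhds_unique h1 h2
  have h3 : Tendsto (fun k : ℕ => f (π^k*t) * χ (π^k*t)) atTop (𝓝 L) := hL.comp htend'
  have h4 : Tendsto (fun k : ℕ => f (π^k*t) * χ' (π^k*t)) atTop (𝓝 L') := hL'.comp htend'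
  have heq2 : ∀ k : ℕ, f (π^k*t) * χ' (π^k*t) = (f (π^k*t) * χ (π^k*t)) * (χ' t / χ t) := by
    intro k
    rw [hχmul _ _ (pow_ne_zero _ hπ0) ht0, hχ'mul _ _ (pow_ne_zero _ hπ0) ht0,
      (hpow k).1, (hpow k).2]
    field_simp
  have h5 : Tendsto (fun k : ℕ => (f (π^k*t) * χ (π^k*t)) * (χ' t / χ t)) atTop
      (𝓝 (L * (χ' t / χ t))) := h3.mul_const _
  have h6 : Tendsto (fun k : ℕ => f (π^k*t) * χ' (π^k*t)) atTop (𝓝 (L * (χ' t / χ t))) := by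
    simpa only [heq2] using h5
  have hkey : L = L * (χ' t / χ t) := hLL'.trans (tendsto_nhds_unique h4 h6)
  have hdiv : χ' t / χ t = 1 := by
    have h7 : L * 1 = L * (χ' t / χ t) := by rw [mul_one]; exact hkey
    exact (mul_left_cancel₀ hLne h7).symm
  exact htne (by rwa [div_eq_one_iff_eq hχt] at hdiv)
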